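/- The Carlitz q-Bernoulli polynomials satisfy βₙ(z) = (1/(q−1)ⁿ) Σ_{k=0}^{n} C(n,k)(−1)^{n−k} ((k+1)/[k+1]_q)(1+(q−1)z)ᵏ. -/

import Mathlib

open Finset Polynomial PowerSeries

noncomputable section

/-- The variable `q`, viewed as a rational function over `ℚ`. -/
def qv : RatFunc ℚ := RatFunc.X

/-- The Carlitz q-Bernoulli numbers: `β 0 = 1` together with the umbral recurrence
`q·(qβ+1)^n − β_n = [n = 1]` for `n ≥ 1`, where after binomial expansion the powers
`β^k` are replaced by `β k`. -/
def IsCarlitz (β : ℕ → RatFunc ℚ) : Prop :=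
  β 0 = 1 ∧ ∀ n : ℕ, 1 ≤ n →
    qv * (∑ k ∈ Finset.range (n + 1), (n.choose k : RatFunc ℚ) * qv ^ k * β k) - β n
      = if n = 1 then 1 else 0

/-- The q-integer `[m]_q = (q^m − 1)/(q − 1)`, for `m : ℤ`. -/
def qint (m : ℤ) : RatFunc ℚ := (qv ^ m - 1) / (qv - 1)

/-- The q-factorial `[n]!_q`. -/
def qfact (n : ℕ) : RatFunc ℚ := ∏ t ∈ Finset.range n, qint (t + 1)

/-- The Gaussian binomial coefficient. -/
def qbinom (n k : ℕ) : RatFunc ℚ := qfact n / (qfact k * qfact (n - k))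

/-- The linear functional `Ψ` on polynomials in `x`, sending `xⁿ` to `β n`. -/
def Psi (β : ℕ → RatFunc ℚ) (p : Polynomial (RatFunc ℚ)) : RatFunc ℚ :=
  p.sum fun n a => a * β n

/-- The q-binomial polynomial
`[i, x; d]_q = (1/[d]!_q) ∏_{t=1}^{d} ([i−d+t]_q + q^{i−d+t} x)`. -/
def qbase (i d : ℕ) : Polynomial (RatFunc ℚ) :=
  Polynomial.C (qfact d)⁻¹ *
    ∏ t ∈ Finset.Icc 1 d,
      (Polynomial.C (qint ((i : ℤ) - d + t)) +
        Polynomial.C (qv ^ ((i : ℤ) - d + t)) * Polynomial.X)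

/-- The Carlitz q-Bernoulli polynomial `βₙ(z) = Ψ((z + (z(q−1)+1)x)ⁿ)`,
expanded as a polynomial in `z` (the variable `X`). -/
def Bpoly (β : ℕ → RatFunc ℚ) (n : ℕ) : Polynomial (RatFunc ℚ) :=
  ∑ k ∈ Finset.range (n + 1),
    Polynomial.C ((n.choose k : RatFunc ℚ) * β k) *
      (Polynomial.C (qv - 1) * Polynomial.X + 1) ^ k * Polynomial.X ^ (n - k)

-- auxiliary

lemma qpow_sub_one_ne (m : ℕ) (hm : 1 ≤ m) : qv ^ m - 1 ≠ 0 := by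
  have : qv ^ m - 1 = algebraMap ℚ[X] (RatFunc ℚ) (Polynomial.X ^ m - 1) := by
    simp [qv, ← RatFunc.algebraMap_X, map_sub, map_one, map_pow]
  rw [this]
  exact RatFunc.algebraMap_ne_zero (by
    intro hh
    have h2 := congrArg (fun p => Polynomial.coeff p m) hh
    simp only [Polynomial.coeff_zero] at h2
    rw [Polynomial.coeff_sub, Polynomial.coeff_X_pow, Polynomial.coeff_one,
      if_pos rfl, if_neg (by omega)] at h2
    norm_num at h2)

lemma qv_sub_one_ne : qv - 1 ≠ 0 := by
  have := qpow_sub_one_ne 1 le_rfl; rwa [pow_one] at this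

lemma qint_eq (j : ℕ) : qint (j + 1) = (qv ^ (j+1) - 1) / (qv - 1) := by
  rw [qint, show ((j:ℤ) + 1) = ((j+1 : ℕ) : ℤ) by push_cast; ring, zpow_natCast]

lemma qint_ne (j : ℕ) : qint (j + 1) ≠ 0 := by
  rw [qint_eq]
  exact div_ne_zero (qpow_sub_one_ne (j+1) (by omega)) qv_sub_one_ne

/-- `A j = (j+1)/[j+1]_q`. -/
def Acoef (j : ℕ) : RatFunc ℚ := ((j : RatFunc ℚ) + 1) / qint (j + 1)

lemma Acoef_mul (j : ℕ) :
    Acoef j * (qv ^ (j+1) - 1) = ((j : RatFunc ℚ) + 1) * (qv - 1) := by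
  rw [Acoef, qint_eq, div_div_eq_mul_div, div_mul_cancel₀ _ (qpow_sub_one_ne (j+1) (by omega))]

/-- closed form candidate for the Carlitz numbers -/
def Bc (m : ℕ) : RatFunc ℚ :=
  (1/(qv-1)^m) * ∑ j ∈ Finset.range (m+1), (m.choose j : RatFunc ℚ) * (-1)^(m-j) * Acoef j

lemma core {R : Type*} [CommRing R] (x y : R) (n j : ℕ) (hj : j ≤ n) :
    ∑ k ∈ Finset.range (n+1),
        (n.choose k : R) * (k.choose j : R) * (-1)^(k-j) * x^k * y^(n-k)
      = (n.choose j : R) * x^j * (y - x)^(n-j) := by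
  rw [Finset.range_eq_Ico]
  rw [← Finset.sum_Ico_consecutive _ (Nat.zero_le j) (by omega : j ≤ n+1)]
  have h0 : ∑ k ∈ Finset.Ico 0 j,
      (n.choose k : R) * (k.choose j : R) * (-1)^(k-j) * x^k * y^(n-k) = 0 := by
    apply Finset.sum_eq_zero
    intro k hk
    simp only [Finset.mem_Ico] at hk
    rw [Nat.choose_eq_zero_of_lt hk.2]
    simp
  rw [h0, zero_add, Finset.sum_Ico_eq_sum_range]
  have hn1 : n + 1 - j = (n - j) + 1 := by omega
  rw [hn1]
  have hstep : ∀ i ∈ Finset.range (n - j + 1),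
      (n.choose (j+i) : R) * ((j+i).choose j : R) * (-1)^(j+i-j) * x^(j+i) * y^(n-(j+i))
        = (n.choose j : R) * x^j * (((n-j).choose i : R) * (-x)^i * y^((n-j)-i)) := by
    intro i hi
    simp only [Finset.mem_range] at hi
    have hle : j + i ≤ n := by omega
    have hcm : (n.choose (j+i)) * ((j+i).choose j) = n.choose j * (n-j).choose i := by
      rw [Nat.choose_mul (Nat.le_add_right j i)]
      congr 1
      · congr 1; omega
    have hcast : ((n.choose (j+i)) * ((j+i).choose j) : R)
        = (n.choose j : R) * ((n-j).choose i : R) := by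
      exact_mod_cast congrArg (Nat.cast (R := R)) hcm
    have h2 : (j + i - j) = i := by omega
    have h3 : n - (j+i) = (n-j) - i := by omega
    rw [h2, h3]
    calc (n.choose (j+i) : R) * ((j+i).choose j : R) * (-1)^i * x^(j+i) * y^((n-j)-i)
        = ((n.choose (j+i) : R) * ((j+i).choose j : R)) * ((-1)^i * x^i) * x^j * y^((n-j)-i) := by
          rw [pow_add]; ring
      _ = (n.choose j : R) * x^j * (((n-j).choose i : R) * (-x)^i * y^((n-j)-i)) := by
          rw [hcast, neg_pow]; ring
  rw [Finset.sum_congr rfl hstep, ← Finset.mul_sum]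
  congr 1
  rw [show y - x = -x + y by ring, add_pow (-x) y (n-j)]
  apply Finset.sum_congr rfl
  intro i _
  ring

lemma altsum {R : Type*} [CommRing R] (m : ℕ) :
    ∑ i ∈ Finset.range (m+1), (m.choose i : R) * (-1)^(m-i)
      = if m = 0 then 1 else 0 := by
  have h := (add_pow (1:R) (-1) m).symm
  calc ∑ i ∈ Finset.range (m+1), (m.choose i : R) * (-1)^(m-i)
      = ∑ i ∈ Finset.range (m+1), (1:R)^i * (-1)^(m-i) * (m.choose i : R) := by
        apply Finset.sum_congr rfl; intro i _; ring
    _ = ((1:R) + (-1))^m := h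
    _ = (0:R)^m := by norm_num
    _ = if m = 0 then 1 else 0 := by
        rcases Nat.eq_zero_or_pos m with rfl | hm
        · simp
        · rw [zero_pow (by omega), if_neg (by omega)]

lemma asum {R : Type*} [CommRing R] (n : ℕ) (hn : 1 ≤ n) :
    ∑ j ∈ Finset.range (n+1), (n.choose j : R) * (-1)^(n-j) * ((j : R) + 1)
      = if n = 1 then 1 else 0 := by
  obtain ⟨m, rfl⟩ : ∃ m, n = m + 1 := ⟨n - 1, by omega⟩
  have split : ∀ j ∈ Finset.range (m+2),
      ((m+1).choose j : R) * (-1)^(m+1-j) * ((j:R)+1)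
        = ((m+1).choose j : R) * (-1)^(m+1-j) * (j:R)
          + ((m+1).choose j : R) * (-1)^(m+1-j) := by
    intro j _; ring
  rw [Finset.sum_congr rfl split, Finset.sum_add_distrib]
  have h2 : ∑ j ∈ Finset.range (m+2), ((m+1).choose j : R) * (-1)^(m+1-j) = 0 := by
    have := altsum (R := R) (m+1)
    rwa [if_neg (by omega)] at this
  rw [h2, add_zero, Finset.sum_range_succ']
  simp only [Nat.cast_zero, mul_zero, add_zero]
  have hstep : ∀ i ∈ Finset.range (m+1),
      ((m+1).choose (i+1) : R) * (-1)^(m+1-(i+1)) * ((i+1 : ℕ) : R)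
        = ((m+1 : ℕ) : R) * ((m.choose i : R) * (-1)^(m-i)) := by
    intro i _
    have hc : (m+1) * m.choose i = (m+1).choose (i+1) * (i+1) := Nat.add_one_mul_choose_eq m i
    have hcast : ((m+1 : ℕ) : R) * (m.choose i : R) = ((m+1).choose (i+1) : R) * ((i+1:ℕ) : R) := by
      exact_mod_cast congrArg (Nat.cast (R := R)) hc
    have h3 : m + 1 - (i+1) = m - i := by omega
    rw [h3]
    linear_combination ((-1 : R))^(m-i) * hcast.symm
  rw [Finset.sum_congr rfl hstep, ← Finset.mul_sum, altsum]
  rcases Nat.eq_zero_or_pos m with rfl | hm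
  · norm_num
  · rw [if_neg (by omega), if_neg (by omega), mul_zero]

lemma Bc_ext {k n : ℕ} (hk : k ≤ n) :
    Bc k = (1/(qv-1)^k) *
      ∑ j ∈ Finset.range (n+1), (k.choose j : RatFunc ℚ) * (-1)^(k-j) * Acoef j := by
  rw [Bc]
  congr 1
  apply Finset.sum_subset (Finset.range_subset_range.mpr (by omega))
  intro j _ hj
  rw [Nat.choose_eq_zero_of_lt (by simp at hj ⊢; omega)]
  simp

lemma keysum (n : ℕ) (u y : RatFunc ℚ) :
    ∑ k ∈ Finset.range (n+1), (n.choose k : RatFunc ℚ) * u^k * y^(n-k) * Bc k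
      = ∑ j ∈ Finset.range (n+1),
          (n.choose j : RatFunc ℚ) * (u/(qv-1))^j * (y - u/(qv-1))^(n-j) * Acoef j := by
  calc ∑ k ∈ Finset.range (n+1), (n.choose k : RatFunc ℚ) * u^k * y^(n-k) * Bc k
      = ∑ k ∈ Finset.range (n+1), ∑ j ∈ Finset.range (n+1),
          (n.choose k : RatFunc ℚ) * (k.choose j : RatFunc ℚ) * (-1)^(k-j)
            * (u/(qv-1))^k * y^(n-k) * Acoef j := by
        apply Finset.sum_congr rfl
        intro k hk
        rw [Bc_ext (Nat.lt_succ_iff.mp (Finset.mem_range.mp hk)), Finset.mul_sum, Finset.mul_sum]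
        apply Finset.sum_congr rfl
        intro j _
        rw [div_pow]
        ring
    _ = ∑ j ∈ Finset.range (n+1), (∑ k ∈ Finset.range (n+1),
          (n.choose k : RatFunc ℚ) * (k.choose j : RatFunc ℚ) * (-1)^(k-j)
            * (u/(qv-1))^k * y^(n-k)) * Acoef j := by
        rw [Finset.sum_comm]
        apply Finset.sum_congr rfl
        intro j _
        rw [Finset.sum_mul]
    _ = ∑ j ∈ Finset.range (n+1),
          (n.choose j : RatFunc ℚ) * (u/(qv-1))^j * (y - u/(qv-1))^(n-j) * Acoef j := by
        apply Finset.sum_congr rfl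
        intro j hj
        rw [core (u/(qv-1)) y n j (Nat.lt_succ_iff.mp (Finset.mem_range.mp hj))]

lemma powh (a : RatFunc ℚ) {j n : ℕ} (hj : j ≤ n) :
    (a/(qv-1))^j * (-(1/(qv-1)))^(n-j) = a^j * (-1)^(n-j) * (1/(qv-1))^n := by
  have hp : (1/(qv-1) : RatFunc ℚ)^j * (1/(qv-1))^(n-j) = (1/(qv-1))^n := by
    rw [← pow_add]; congr 1; omega
  rw [neg_pow, ← hp]
  ring

lemma Bc_rec (n : ℕ) (hn : 1 ≤ n) :
    qv * (∑ k ∈ Finset.range (n + 1), (n.choose k : RatFunc ℚ) * qv ^ k * Bc k) - Bc n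
      = if n = 1 then 1 else 0 := by
  have h1 : ∑ k ∈ Finset.range (n + 1), (n.choose k : RatFunc ℚ) * qv ^ k * Bc k
      = ∑ j ∈ Finset.range (n+1),
          (n.choose j : RatFunc ℚ) * (qv/(qv-1))^j * ((1:RatFunc ℚ) - qv/(qv-1))^(n-j)
            * Acoef j := by
    rw [← keysum n qv 1]
    apply Finset.sum_congr rfl
    intro k _
    rw [one_pow, mul_one]
  rw [h1]
  have hone : (1:RatFunc ℚ) - qv/(qv-1) = -(1/(qv-1)) := by
    have hq := qv_sub_one_ne
    field_simp
    ring
  rw [hone]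
  have h2 : ∀ j ∈ Finset.range (n+1),
      (n.choose j : RatFunc ℚ) * (qv/(qv-1))^j * (-(1/(qv-1)))^(n-j) * Acoef j
        = (n.choose j : RatFunc ℚ) * qv^j * (-1)^(n-j) * (1/(qv-1))^n * Acoef j := by
    intro j hj
    have hle : j ≤ n := Nat.lt_succ_iff.mp (Finset.mem_range.mp hj)
    calc (n.choose j : RatFunc ℚ) * (qv/(qv-1))^j * (-(1/(qv-1)))^(n-j) * Acoef j
        = (n.choose j : RatFunc ℚ) * ((qv/(qv-1))^j * (-(1/(qv-1)))^(n-j)) * Acoef j := by ring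
      _ = (n.choose j : RatFunc ℚ) * qv^j * (-1)^(n-j) * (1/(qv-1))^n * Acoef j := by
          rw [powh qv hle]; ring
  rw [Finset.sum_congr rfl h2, Bc, Finset.mul_sum, Finset.mul_sum, ← Finset.sum_sub_distrib]
  have h3 : ∀ j ∈ Finset.range (n+1),
      qv * ((n.choose j : RatFunc ℚ) * qv^j * (-1)^(n-j) * (1/(qv-1))^n * Acoef j)
        - (1/(qv-1)^n) * ((n.choose j : RatFunc ℚ) * (-1)^(n-j) * Acoef j)
        = ((1/(qv-1))^n * (qv-1)) * ((n.choose j : RatFunc ℚ) * (-1)^(n-j) * ((j:RatFunc ℚ)+1)) := by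
    intro j _
    linear_combination ((1/(qv-1))^n * (n.choose j : RatFunc ℚ) * (-1)^(n-j)) * Acoef_mul j
  rw [Finset.sum_congr rfl h3, ← Finset.mul_sum, asum n hn]
  rcases eq_or_ne n 1 with rfl | hne
  · rw [if_pos rfl, mul_one, pow_one, one_div, inv_mul_cancel₀ qv_sub_one_ne]
  · rw [if_neg hne, mul_zero]

lemma qint_one : qint 1 = 1 := by
  have h0 := qint_eq 0
  norm_num at h0
  rw [h0]
  exact div_self qv_sub_one_ne

lemma Bc_zero : Bc 0 = 1 := by
  simp [Bc, Acoef, qint_one]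

lemma beta_eq {β : ℕ → RatFunc ℚ} (h : IsCarlitz β) : ∀ n, β n = Bc n := by
  intro n
  induction n using Nat.strong_induction_on with
  | _ n ih =>
    rcases Nat.eq_zero_or_pos n with rfl | hn
    · rw [h.1, Bc_zero]
    · have h1 := h.2 n hn
      have h2 := Bc_rec n hn
      rw [Finset.sum_range_succ] at h1 h2
      have hsum : ∑ k ∈ Finset.range n, (n.choose k : RatFunc ℚ) * qv^k * β k
          = ∑ k ∈ Finset.range n, (n.choose k : RatFunc ℚ) * qv^k * Bc k := by
        apply Finset.sum_congr rfl
        intro k hk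
        rw [ih k (Finset.mem_range.mp hk)]
      rw [hsum, Nat.choose_self] at h1
      rw [Nat.choose_self] at h2
      have h3 := h1.trans h2.symm
      have key : (qv^(n+1) - 1) * (β n - Bc n) = 0 := by
        linear_combination h3
      rcases mul_eq_zero.mp key with hk | hk
      · exact absurd hk (qpow_sub_one_ne (n+1) (by omega))
      · exact sub_eq_zero.mp hk


/-- Carlitz's formula (5.3):
`βₙ(z) = (1/(q−1)ⁿ) Σₖ C(n,k)(−1)^{n−k}((k+1)/[k+1]_q)(1+(q−1)z)ᵏ`. -/
theorem carlitz_poly_formula (β : ℕ → RatFunc ℚ) (h : IsCarlitz β) (n : ℕ)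
    (z : RatFunc ℚ) :
    (Bpoly β n).eval z
      = (1 / (qv - 1) ^ n) *
        ∑ k ∈ Finset.range (n + 1),
          (n.choose k : RatFunc ℚ) * (-1) ^ (n - k) *
            (((k : RatFunc ℚ) + 1) / qint (k + 1)) * (1 + (qv - 1) * z) ^ k := by
  have heval : (Bpoly β n).eval z
      = ∑ k ∈ Finset.range (n+1),
          (n.choose k : RatFunc ℚ) * ((1 + (qv-1)*z))^k * z^(n-k) * Bc k := by
    rw [Bpoly, Polynomial.eval_finset_sum]
    apply Finset.sum_congr rfl
    intro k _
    rw [beta_eq h k]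
    simp only [Polynomial.eval_mul, Polynomial.eval_pow, Polynomial.eval_add,
      Polynomial.eval_one, Polynomial.eval_C, Polynomial.eval_X]
    ring
  rw [heval, keysum n (1 + (qv-1)*z) z]
  have hone : z - (1 + (qv-1)*z)/(qv-1) = -(1/(qv-1)) := by
    have hq := qv_sub_one_ne
    field_simp
    ring
  rw [hone]
  rw [Finset.mul_sum]
  apply Finset.sum_congr rfl
  intro j hj
  have hle : j ≤ n := Nat.lt_succ_iff.mp (Finset.mem_range.mp hj)
  calc (n.choose j : RatFunc ℚ) * ((1 + (qv-1)*z)/(qv-1))^j * (-(1/(qv-1)))^(n-j) * Acoef j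
      = (n.choose j : RatFunc ℚ) * (((1 + (qv-1)*z)/(qv-1))^j * (-(1/(qv-1)))^(n-j)) * Acoef j := by
        ring
    _ = (n.choose j : RatFunc ℚ) * ((1 + (qv-1)*z)^j * (-1)^(n-j) * (1/(qv-1))^n) * Acoef j := by
        rw [powh (1 + (qv-1)*z) hle]
    _ = 1/(qv-1)^n * ((n.choose j : RatFunc ℚ) * (-1)^(n-j)
          * (((j : RatFunc ℚ) + 1) / qint (j + 1)) * (1 + (qv-1)*z)^j) := by
        rw [Acoef, one_div_pow]
        ring
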